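/- Let C be a coassociative counital K-coalgebra in which every element lies in a finite-dimensional subcoalgebra. Suppose given linear forms ε_n : C → K (n ∈ ℕ) such that for every nonzero finitely supported λ : ℕ →₀ K, the linear map σ_λ : C → C defined by σ_λ(x) = Σ_n λ_n (ε_n ⊗ id)(δ(x)) is injective. Then C = 0. -/
import Mathlib


open TensorProduct

/-- The map (φ ⊗ id) ∘ δ : C → C associated to a linear form φ on a coalgebra C. -/
noncomputable def convAction (K C : Type*) [CommRing K] [AddCommGroup C] [Module K C]
    [Coalgebra K C] (φ : C →ₗ[K] K) : C →ₗ[K] C :=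
  (TensorProduct.lid K C).toLinearMap ∘ₗ φ.rTensor C ∘ₗ Coalgebra.comul

lemma convAction_add (K C : Type*) [CommRing K] [AddCommGroup C] [Module K C]
    [Coalgebra K C] (φ ψ : C →ₗ[K] K) :
    convAction K C (φ + ψ) = convAction K C φ + convAction K C ψ := by
  simp [convAction, LinearMap.rTensor_add, LinearMap.comp_add, LinearMap.add_comp]

lemma convAction_smul (K C : Type*) [CommRing K] [AddCommGroup C] [Module K C]
    [Coalgebra K C] (c : K) (φ : C →ₗ[K] K) :
    convAction K C (c • φ) = c • convAction K C φ := by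
  simp [convAction, LinearMap.rTensor_smul, LinearMap.comp_smul, LinearMap.smul_comp]

/-- Bundled version of `convAction`, linear in the form. -/
noncomputable def convActionL (K C : Type*) [CommRing K] [AddCommGroup C] [Module K C]
    [Coalgebra K C] : (C →ₗ[K] K) →ₗ[K] (C →ₗ[K] C) where
  toFun := convAction K C
  map_add' := convAction_add K C
  map_smul' := convAction_smul K C

theorem stmt_6 (K C : Type*) [Field K] [AddCommGroup C] [Module K C] [Coalgebra K C]
    (hloc : ∀ x : C, ∃ D : Submodule K C, FiniteDimensional K D ∧ x ∈ D ∧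
      ∀ y ∈ D, Coalgebra.comul (R := K) y ∈
        LinearMap.range (TensorProduct.map D.subtype D.subtype))
    (ε : ℕ → (C →ₗ[K] K))
    (hinj : ∀ lam : ℕ →₀ K, lam ≠ 0 →
      Function.Injective (convAction K C (lam.sum fun n c => c • ε n))) :
    ∀ x : C, x = 0 := by
  intro x
  obtain ⟨D, hfin, hxD, hD⟩ := hloc x
  -- convAction maps D into D
  have hmem : ∀ (φ : C →ₗ[K] K), ∀ y ∈ D, convAction K C φ y ∈ D := by
    intro φ y hy
    obtain ⟨z, hz⟩ := hD y hy
    have : convAction K C φ y =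
        (TensorProduct.lid K C).toLinearMap (φ.rTensor C (Coalgebra.comul y)) := rfl
    rw [this, ← hz]
    clear hz
    induction z using TensorProduct.induction_on with
    | zero => simp
    | tmul a b =>
        simp only [TensorProduct.map_tmul, LinearMap.rTensor_tmul,
          LinearEquiv.coe_toLinearMap, TensorProduct.lid_tmul]
        exact D.smul_mem _ b.2
    | add a b ha hb =>
        simp only [map_add]
        exact D.add_mem ha hb
  -- restriction of each convAction (ε n) to D
  let g : ℕ → (D →ₗ[K] D) := fun n => (convAction K C (ε n)).restrict (hmem (ε n))
  have hnotind : ¬ LinearIndependent K g := by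
    intro h
    have : Finite ℕ := h.finite_of_isNoetherian
    exact (instInfiniteNat.not_finite this).elim
  rw [linearIndependent_iff] at hnotind
  push_neg at hnotind
  obtain ⟨lam, hlam0, hlamne⟩ := hnotind
  have h2 : ∑ n ∈ lam.support, lam n • g n = 0 := by
    rw [Finsupp.linearCombination_apply, Finsupp.sum] at hlam0
    exact hlam0
  have h1 : convAction K C (lam.sum fun n c => c • ε n) =
      ∑ n ∈ lam.support, lam n • convAction K C (ε n) := by
    show convActionL K C (lam.sum fun n c => c • ε n) = _
    rw [Finsupp.sum, map_sum]
    simp [convActionL, convAction_smul]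
  have key : convAction K C (lam.sum fun n c => c • ε n) x = 0 := by
    rw [h1, LinearMap.sum_apply]
    have hterm : ∀ n, (lam n • convAction K C (ε n)) x
        = ((lam n • g n) ⟨x, hxD⟩ : C) := by
      intro n
      simp [g, LinearMap.restrict_coe_apply]
    calc ∑ n ∈ lam.support, (lam n • convAction K C (ε n)) x
        = ∑ n ∈ lam.support, ((lam n • g n) ⟨x, hxD⟩ : C) := by
          exact Finset.sum_congr rfl fun n _ => hterm n
      _ = (((∑ n ∈ lam.support, lam n • g n) ⟨x, hxD⟩ : D) : C) := by
          rw [LinearMap.sum_apply]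
          push_cast
          rfl
      _ = 0 := by rw [h2]; simp
  exact hinj lam hlamne (key.trans (map_zero _).symm)
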